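/- Fourth-derivative coefficient at the triple critical point: Let x, σ be real numbers with 4·σ⁶·x⁴ = 2x − 3, x ≠ 0, x ≠ 2, and σ ≠ 0. Define α' = 2σ(1 − x³σ³)/(2 − x) and β' = 2σ(1 + x³σ³)/(2 − x). Then σ ≠ α', σ ≠ β', and (1/4)·( (σ − α')^{−4} − (σ − β')^{−4} ) = (x − 1)/(2·x²·σ). -/

import Mathlib

/-- Fourth-derivative coefficient at the triple critical point: if `4σ⁶x⁴ = 2x − 3`,
`x ≠ 0`, `x ≠ 2`, `σ ≠ 0`, then with `α' = 2σ(1 − x³σ³)/(2 − x)` and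
`β' = 2σ(1 + x³σ³)/(2 − x)` one has `σ ≠ α'`, `σ ≠ β'`, and
`(1/4)·((σ − α')⁻⁴ − (σ − β')⁻⁴) = (x − 1)/(2x²σ)`. -/
theorem fourth_derivative_coefficient (x σ : ℝ)
    (hcurve : 4 * σ ^ 6 * x ^ 4 = 2 * x - 3) (hx0 : x ≠ 0) (hx2 : x ≠ 2) (hσ : σ ≠ 0) :
    σ ≠ 2 * σ * (1 - x ^ 3 * σ ^ 3) / (2 - x) ∧
      σ ≠ 2 * σ * (1 + x ^ 3 * σ ^ 3) / (2 - x) ∧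
      (1 / 4) *
          (((σ - 2 * σ * (1 - x ^ 3 * σ ^ 3) / (2 - x)) ^ 4)⁻¹ -
            ((σ - 2 * σ * (1 + x ^ 3 * σ ^ 3) / (2 - x)) ^ 4)⁻¹) =
        (x - 1) / (2 * x ^ 2 * σ) := by
  have h2x : (2 : ℝ) - x ≠ 0 := fun h => hx2 (by linarith)
  -- t = 2 x² σ³ satisfies t² = 2x - 3, and t ≠ ±1 since x ≠ 2
  have ht1 : 2 * x ^ 2 * σ ^ 3 - 1 ≠ 0 := by
    intro h
    have : (2 * x ^ 2 * σ ^ 3) ^ 2 = 2 * x - 3 := by nlinarith [hcurve]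
    have : x = 2 := by nlinarith [this, h]
    exact hx2 this
  have ht2 : 2 * x ^ 2 * σ ^ 3 + 1 ≠ 0 := by
    intro h
    have : (2 * x ^ 2 * σ ^ 3) ^ 2 = 2 * x - 3 := by nlinarith [hcurve]
    have : x = 2 := by nlinarith [this, h]
    exact hx2 this
  have ha : σ - 2 * σ * (1 - x ^ 3 * σ ^ 3) / (2 - x)
      = σ * x * (2 * x ^ 2 * σ ^ 3 - 1) / (2 - x) := by
    field_simp
    ring
  have hb : σ - 2 * σ * (1 + x ^ 3 * σ ^ 3) / (2 - x)
      = -(σ * x * (2 * x ^ 2 * σ ^ 3 + 1)) / (2 - x) := by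
    field_simp
    ring
  have haz : σ - 2 * σ * (1 - x ^ 3 * σ ^ 3) / (2 - x) ≠ 0 := by
    rw [ha]
    exact div_ne_zero (mul_ne_zero (mul_ne_zero hσ hx0) ht1) h2x
  have hbz : σ - 2 * σ * (1 + x ^ 3 * σ ^ 3) / (2 - x) ≠ 0 := by
    rw [hb]
    exact div_ne_zero (neg_ne_zero.mpr (mul_ne_zero (mul_ne_zero hσ hx0) ht2)) h2x
  refine ⟨fun h => haz (by rw [← h]; ring), fun h => hbz (by rw [← h]; ring), ?_⟩
  rw [ha, hb]
  rw [div_pow, div_pow]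
  have hA : σ ^ 3 * x ^ 2 * 2 - 1 ≠ 0 := by convert ht1 using 1; ring
  have hB : σ ^ 3 * x ^ 2 * 2 + 1 ≠ 0 := by convert ht2 using 1; ring
  field_simp
  linear_combination (16 * (2 * x ^ 2 * σ ^ 3) * (2 - x) ^ 4 - 2 * (2 * x ^ 2 * σ ^ 3) * (x - 1) * (((2 * x ^ 2 * σ ^ 3) ^ 2 - 1) ^ 3 + ((2 * x ^ 2 * σ ^ 3) ^ 2 - 1) ^ 2 * (2 * x - 4) + ((2 * x ^ 2 * σ ^ 3) ^ 2 - 1) * (2 * x - 4) ^ 2 + (2 * x - 4) ^ 3)) * hcurve
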